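/- For every f ∈ H, cov(ℳ) ≤ 𝔤𝔢(I_f), where cov(ℳ) is the least cardinality of a family of meagre subsets of 2^ω whose union is all of 2^ω, and 𝔤𝔢(I_f) is the least cardinality of a filter base ℱ of I_f-positive subsets of ℚ such that for every I ⊆ ℚ with I ∈ I_f there exists F ∈ ℱ with I ∩ F finite. Consequently cov(ℳ) ≤ 𝔤𝔢(Laver) := min{𝔤𝔢(I_f) : f ∈ H}. -/

import Mathlib

/-- `ℚ ⊆ 2^ω`: the set of eventually-zero binary sequences. -/
def QSet : Set (ℕ → Bool) := {x | ∀ᶠ n in Filter.atTop, x n = false}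

/-- `level A n` is the number of distinct restrictions to `n` of elements of `A ⊆ 2^ω`. -/
noncomputable def level (A : Set (ℕ → Bool)) (n : ℕ) : ℕ :=
  ((fun x : ℕ → Bool => (fun i : Fin n => x i)) '' A).ncard

/-- The class `H` of non-decreasing, unbounded `f : ℕ → ℕ` with `f n ≤ n`. -/
def memH (f : ℕ → ℕ) : Prop :=
  Monotone f ∧ (∀ m : ℕ, ∃ n, m ≤ f n) ∧ ∀ n, f n ≤ n

/-- The ideal `I_f`, viewed as an ideal on the countable set `ℚ ⊆ 2^ω`. -/
def idealIQ (f : ℕ → ℕ) : Set (Set (ℕ → Bool)) :=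
  {A | A ⊆ QSet ∧ ∀ d : ℕ, 1 ≤ d → ∀ᶠ n in Filter.atTop, d * level A n ≤ f n}

/-- A filter base of subsets of `ℚ`. -/
def IsFilterBaseQ (F : Set (Set (ℕ → Bool))) : Prop :=
  F.Nonempty ∧ (∀ A ∈ F, A ⊆ QSet) ∧ ∀ A ∈ F, ∀ B ∈ F, ∃ C ∈ F, C ⊆ A ∩ B

/-- The generic existence number `𝔤𝔢(I_f)`: the least cardinality of a filter base of
`I_f`-positive subsets of `ℚ` almost disjoint from every member of `I_f`. -/
noncomputable def geI (f : ℕ → ℕ) : Cardinal :=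
  sInf {c : Cardinal | ∃ F : Set (Set (ℕ → Bool)), IsFilterBaseQ F ∧
    (∀ A ∈ F, A ∉ idealIQ f) ∧ (∀ I ∈ idealIQ f, ∃ A ∈ F, (I ∩ A).Finite) ∧
    Cardinal.mk F = c}

/-- `𝔤𝔢(Laver) := min {𝔤𝔢(I_f) : f ∈ H}`. -/
noncomputable def geLaver : Cardinal :=
  sInf {c : Cardinal | ∃ f : ℕ → ℕ, memH f ∧ geI f = c}

/-- `cov(ℳ)`: the least cardinality of a family of meagre subsets of `2^ω` covering `2^ω`. -/
noncomputable def covMeagre : Cardinal :=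
  sInf {c : Cardinal | ∃ S : Set (Set (ℕ → Bool)), (∀ A ∈ S, IsMeagre A) ∧
    ⋃₀ S = Set.univ ∧ Cardinal.mk S = c}

open Filter Set in
section
end

namespace Ge14
open Filter Set

/-- cylinder -/
def Cyl (y : ℕ → Bool) (n : ℕ) : Set (ℕ → Bool) := {q | ∀ i < n, q i = y i}

lemma mem_QSet_iff {q : ℕ → Bool} : q ∈ QSet ↔ ∃ N, ∀ i ≥ N, q i = false := by
  simp [QSet, Filter.eventually_atTop]

lemma ideal_empty (f : ℕ → ℕ) : (∅ : Set (ℕ → Bool)) ∈ idealIQ f := by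
  refine ⟨empty_subset _, fun d hd => Eventually.of_forall (fun n => ?_)⟩
  simp [level]

lemma ideal_union {f : ℕ → ℕ} {I J : Set (ℕ → Bool)} (hI : I ∈ idealIQ f)
    (hJ : J ∈ idealIQ f) : I ∪ J ∈ idealIQ f := by
  refine ⟨union_subset hI.1 hJ.1, fun d hd => ?_⟩
  filter_upwards [hI.2 (2*d) (by omega), hJ.2 (2*d) (by omega)] with n ha hb
  have hlev : level (I ∪ J) n ≤ level I n + level J n := by
    unfold level
    rw [Set.image_union]
    exact Set.ncard_union_le _ _
  have h1 : d * level (I ∪ J) n ≤ d * (level I n + level J n) :=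
    Nat.mul_le_mul_left _ hlev
  have h2 : d * (level I n + level J n) = d * level I n + d * level J n := by ring
  have ha' : 2 * (d * level I n) ≤ f n := by rw [← mul_assoc]; exact ha
  have hb' : 2 * (d * level J n) ≤ f n := by rw [← mul_assoc]; exact hb
  omega

lemma infinite_of_pos {f : ℕ → ℕ} (hf : memH f) {A : Set (ℕ → Bool)} (hAQ : A ⊆ QSet)
    (hA : A ∉ idealIQ f) : A.Infinite := by
  by_contra h
  rw [Set.not_infinite] at h
  refine hA ⟨hAQ, fun d hd => ?_⟩
  obtain ⟨n0, h0⟩ := hf.2.1 (d * A.ncard)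
  rw [Filter.eventually_atTop]
  refine ⟨n0, fun n hn => ?_⟩
  calc d * level A n ≤ d * A.ncard := Nat.mul_le_mul_left _ (Set.ncard_image_le h)
    _ ≤ f n0 := h0
    _ ≤ f n := hf.1 hn


lemma ext_count {I : Set (ℕ → Bool)} (n c : ℕ) (s : Fin n → Bool)
    (hsubI : ∀ q ∈ QSet, (∀ i : Fin n, q i = s i) → q ∈ I) :
    2 ^ c ≤ level I (n + c) := by
  let e : (Fin c → Bool) → (ℕ → Bool) := fun t i =>
    if h : i < n then s ⟨i, h⟩ else if h' : i - n < c then t ⟨i - n, h'⟩ else false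
  have hev : ∀ t (i : Fin c), e t (n + i.1) = t i := by
    intro t i
    have h1 : ¬ (n + i.1 < n) := by omega
    simp only [e, dif_neg h1, Nat.add_sub_cancel_left, dif_pos i.isLt, Fin.eta]
  have he_mem : ∀ t, e t ∈ I := by
    intro t
    refine hsubI _ (mem_QSet_iff.mpr ⟨n + c, fun i hi => ?_⟩) (fun i => ?_)
    · have h1 : ¬ (i < n) := by omega
      have h2 : ¬ (i - n < c) := by omega
      simp only [e, dif_neg h1, dif_neg h2]
    · simp only [e, dif_pos i.isLt]
  have hinj : Function.Injective (fun t : Fin c → Bool => (fun i : Fin (n+c) => e t i)) := by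
    intro t t' h
    funext i
    have h2 := congrFun h ⟨n + i.1, by omega⟩
    simp only at h2
    rw [hev t i, hev t' i] at h2
    exact h2
  have hsub : Set.range (fun t : Fin c → Bool => (fun i : Fin (n+c) => e t i)) ⊆
      (fun x : ℕ → Bool => (fun i : Fin (n+c) => x i)) '' I := by
    rintro _ ⟨t, rfl⟩
    exact ⟨e t, he_mem t, rfl⟩
  calc 2 ^ c = Nat.card (Fin c → Bool) := by simp [Nat.card_eq_fintype_card]
    _ = Nat.card (Set.range (fun t : Fin c → Bool => (fun i : Fin (n+c) => e t i))) :=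
        (Nat.card_range_of_injective hinj).symm
    _ = (Set.range (fun t : Fin c → Bool => (fun i : Fin (n+c) => e t i))).ncard :=
        Nat.card_coe_set_eq _
    _ ≤ level I (n + c) := Set.ncard_le_ncard hsub (Set.toFinite _)

lemma exists_ext {f : ℕ → ℕ} (hfH : memH f) {I : Set (ℕ → Bool)} (hI : I ∈ idealIQ f)
    (n : ℕ) (s : Fin n → Bool) :
    ∃ q ∈ QSet \ I, (fun i : Fin n => q i) = s := by
  by_contra hcon
  push_neg at hcon
  have hsubI : ∀ q ∈ QSet, (∀ i : Fin n, q i = s i) → q ∈ I := by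
    intro q hq hqs
    by_contra hqI
    exact hcon q ⟨hq, hqI⟩ (funext hqs)
  obtain ⟨N0, hN0⟩ := Filter.eventually_atTop.mp (hI.2 1 le_rfl)
  obtain ⟨s0, hs01, hs0N⟩ : ∃ s0, 1 ≤ s0 ∧ N0 ≤ s0 := ⟨max 1 N0, le_max_left _ _, le_max_right _ _⟩
  have hlev : 2 ^ (n + s0) ≤ level I (n + (n + s0)) := ext_count n (n + s0) s hsubI
  have hfm : level I (n + (n + s0)) ≤ f (n + (n + s0)) := by
    have := hN0 (n + (n + s0)) (by omega)
    omega
  have hfmm : f (n + (n + s0)) ≤ n + (n + s0) := hfH.2.2 _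
  have h1 : n + 1 ≤ 2 ^ n := Nat.lt_two_pow_self (n := n)
  have h2 : s0 + 1 ≤ 2 ^ s0 := Nat.lt_two_pow_self (n := s0)
  have h3 : (n + (n + s0)) + 1 ≤ (n+1) * (s0+1) := by nlinarith
  have h4 : (n+1) * (s0+1) ≤ 2 ^ n * 2 ^ s0 := Nat.mul_le_mul h1 h2
  have h5 : 2 ^ n * 2 ^ s0 = 2 ^ (n + s0) := (pow_add 2 n s0).symm
  omega

lemma compl_pos {f : ℕ → ℕ} (hfH : memH f) {I : Set (ℕ → Bool)} (hI : I ∈ idealIQ f) :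
    (QSet \ I) ∉ idealIQ f := by
  intro hmem
  obtain ⟨N, hN⟩ := Filter.eventually_atTop.mp (hmem.2 1 le_rfl)
  have himg : (fun x : ℕ → Bool => (fun i : Fin N => x i)) '' (QSet \ I) = Set.univ := by
    refine Set.eq_univ_of_forall (fun s => ?_)
    obtain ⟨q, hq, hqs⟩ := exists_ext hfH hI N s
    exact ⟨q, hq, hqs⟩
  have hlev : level (QSet \ I) N = 2 ^ N := by
    unfold level
    rw [himg, Set.ncard_univ, Nat.card_eq_fintype_card]
    simp
  have := hN N le_rfl
  have h2 := hfH.2.2 N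
  have := Nat.lt_two_pow_self (n := N)
  omega


lemma exists_branch (F : Set (Set (ℕ → Bool)))
    (hdir : ∀ A ∈ F, ∀ B ∈ F, ∃ C ∈ F, C ⊆ A ∩ B)
    (hinf : ∀ A ∈ F, (A : Set (ℕ → Bool)).Infinite) :
    ∃ y : ℕ → Bool, ∀ A ∈ F, ∀ n, (A ∩ Cyl y n).Infinite := by
  classical
  let step : (ℕ → Bool) → ℕ → (ℕ → Bool) := fun v n =>
    if ∀ A ∈ F, (A ∩ Cyl (Function.update v n true) (n+1)).Infinite
    then Function.update v n true else Function.update v n false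
  let v : ℕ → (ℕ → Bool) := fun n =>
    Nat.rec (motive := fun _ => ℕ → Bool) (fun _ => false) (fun m vm => step vm m) n
  have hv_succ : ∀ n, v (n+1) = step (v n) n := fun n => rfl
  -- splitting of cylinders
  have hsplit : ∀ (w : ℕ → Bool) (n : ℕ) (C : Set (ℕ → Bool)),
      C ∩ Cyl w n ⊆ (C ∩ Cyl (Function.update w n true) (n+1)) ∪
        (C ∩ Cyl (Function.update w n false) (n+1)) := by
    intro w n C q hq
    have hcylmem : ∀ b : Bool, q n = b → q ∈ Cyl (Function.update w n b) (n+1) := by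
      intro b hb i hi
      rcases Nat.lt_succ_iff_lt_or_eq.mp hi with h | h
      · rw [Function.update_of_ne (by omega)]
        exact hq.2 i h
      · subst h; rw [Function.update_self]; exact hb
    cases hqn : q n with
    | true => exact Or.inl ⟨hq.1, hcylmem true hqn⟩
    | false => exact Or.inr ⟨hq.1, hcylmem false hqn⟩
  -- invariant
  have hInv : ∀ n, ∀ A ∈ F, (A ∩ Cyl (v n) n).Infinite := by
    intro n
    induction n with
    | zero =>
      intro A hA
      have : A ∩ Cyl (v 0) 0 = A := by
        ext q; simp [Cyl]
      rw [this]; exact hinf A hA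
    | succ n ih =>
      rw [hv_succ]
      by_cases hcond : ∀ A ∈ F, (A ∩ Cyl (Function.update (v n) n true) (n+1)).Infinite
      · simpa [step, if_pos hcond] using hcond
      · simp only [step, if_neg hcond]
        push_neg at hcond
        obtain ⟨A0, hA0, hA0fin⟩ := hcond
        intro A hA
        obtain ⟨C, hC, hCsub⟩ := hdir A0 hA0 A hA
        have hCinf := ih C hC
        have := Set.infinite_union.mp (hCinf.mono (hsplit (v n) n C))
        have hsubA0 : C ∩ Cyl (Function.update (v n) n true) (n+1) ⊆
            A0 ∩ Cyl (Function.update (v n) n true) (n+1) :=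
          Set.inter_subset_inter (fun q hq => (hCsub hq).1) (fun q hq => hq)
        have hsubA : C ∩ Cyl (Function.update (v n) n false) (n+1) ⊆
            A ∩ Cyl (Function.update (v n) n false) (n+1) :=
          Set.inter_subset_inter (fun q hq => (hCsub hq).2) (fun q hq => hq)
        rcases this with h | h
        · exact absurd (h.mono hsubA0) (by rw [Set.not_infinite]; exact hA0fin)
        · exact h.mono hsubA
  -- coherence
  have hcoh : ∀ n i, i < n → v n i = v (i+1) i := by
    intro n
    induction n with
    | zero => intro i hi; omega
    | succ n ih =>
      intro i hi
      rcases Nat.lt_succ_iff_lt_or_eq.mp hi with h | h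
      · rw [← ih i h]
        rw [hv_succ]
        have : i ≠ n := by omega
        simp only [step]
        split <;> rw [Function.update_of_ne this]
      · subst h; rfl
  refine ⟨fun i => v (i+1) i, fun A hA n => ?_⟩
  have : Cyl (fun i => v (i+1) i) n = Cyl (v n) n := by
    ext q
    simp only [Cyl, Set.mem_setOf_eq]
    constructor <;> intro hq i hi
    · rw [hcoh n i hi]; exact hq i hi
    · rw [← hcoh n i hi]; exact hq i hi
  rw [this]
  exact hInv n A hA

lemma exists_ladder (f : ℕ → ℕ) (hf : memH f) :
    ∃ nk : ℕ → ℕ, StrictMono nk ∧ ∀ k, (k+1)*(k+2) ≤ f (nk k) := by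
  obtain ⟨hmono, hunb, -⟩ := hf
  choose g hg using hunb
  refine ⟨fun k => Nat.rec (g 2) (fun k ih => max (ih+1) (g ((k+2)*(k+3)))) k, ?_, ?_⟩
  · apply strictMono_nat_of_lt_succ
    intro k
    exact lt_of_lt_of_le (Nat.lt_succ_self _) (le_max_left _ _)
  · intro k
    cases k with
    | zero => simpa using hg 2
    | succ k => exact le_trans (hg _) (hmono (le_max_right _ _))


open scoped Classical in
/-- the `k`-th decoded element of `2^ω`, following the branch `y` up to level `nk k`. -/
noncomputable def qk (nk : ℕ → ℕ) (y : ℕ → Bool) (x : ℕ → Bool) (k : ℕ) : ℕ → Bool :=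
  fun i =>
    if i < nk k then y i
    else if h : ∃ j, x (Nat.pair k (2 * j)) = true then
      (if i < nk k + Nat.find h then x (Nat.pair k (2 * (i - nk k) + 1)) else false)
    else false

lemma qk_agree (nk : ℕ → ℕ) (y x : ℕ → Bool) (k : ℕ) {i : ℕ} (hi : i < nk k) :
    qk nk y x k i = y i := by
  simp [qk, if_pos hi]

lemma qk_mem_QSet (nk : ℕ → ℕ) (y x : ℕ → Bool) (k : ℕ) : qk nk y x k ∈ QSet := by
  rw [mem_QSet_iff]
  by_cases h : ∃ j, x (Nat.pair k (2 * j)) = true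
  · refine ⟨nk k + Nat.find h, fun i hi => ?_⟩
    simp only [qk, if_neg (by omega : ¬ i < nk k), dif_pos h, if_neg (by omega : ¬ i < nk k + Nat.find h)]
  · refine ⟨nk k, fun i hi => ?_⟩
    simp only [qk, if_neg (by omega : ¬ i < nk k), dif_neg h]

/-- if the bits of `x` on block `k` code `q`, then `qk` reads off `q`. -/
lemma qk_eq (nk : ℕ → ℕ) (y x : ℕ → Bool) (k : ℕ) {q : ℕ → Bool} {r : ℕ}
    (hagree : ∀ i < nk k, q i = y i)
    (hzero : ∀ i, nk k + r ≤ i → q i = false)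
    (heven : ∀ j ≤ r, x (Nat.pair k (2 * j)) = decide (j = r))
    (hodd : ∀ i < r, x (Nat.pair k (2 * i + 1)) = q (nk k + i)) :
    qk nk y x k = q := by
  have hst : ∃ j, x (Nat.pair k (2 * j)) = true := ⟨r, by simp [heven r le_rfl]⟩
  have hfind : Nat.find hst = r := by
    rw [Nat.find_eq_iff]
    refine ⟨by simp [heven r le_rfl], fun j hj => ?_⟩
    rw [heven j (le_of_lt hj)]
    simp [Nat.ne_of_lt hj]
  funext i
  by_cases h1 : i < nk k
  · rw [qk_agree nk y x k h1, hagree i h1]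
  · simp only [qk, if_neg h1, dif_pos hst, hfind]
    by_cases h2 : i < nk k + r
    · rw [if_pos h2, hodd (i - nk k) (by omega)]
      congr 1
      omega
    · rw [if_neg h2, hzero i (by omega)]

/-- stability: `qk` only depends on finitely many bits of `x` when the block is "stopped". -/
lemma qk_stable (nk : ℕ → ℕ) (y x x' : ℕ → Bool) (k : ℕ)
    (hst : ∃ j, x (Nat.pair k (2 * j)) = true)
    (hag : ∀ j ≤ 2 * Nat.find hst + 1, x' (Nat.pair k j) = x (Nat.pair k j)) :
    qk nk y x' k = qk nk y x k := by
  set r := Nat.find hst with hr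
  have hst' : ∃ j, x' (Nat.pair k (2 * j)) = true := by
    refine ⟨r, ?_⟩
    rw [hag (2 * r) (by omega)]
    exact Nat.find_spec hst
  have hfind' : Nat.find hst' = r := by
    rw [Nat.find_eq_iff]
    constructor
    · rw [hag (2 * r) (by omega)]; exact Nat.find_spec hst
    · intro j hj
      rw [hag (2 * j) (by omega)]
      exact Nat.find_min hst hj
  funext i
  by_cases h1 : i < nk k
  · rw [qk_agree nk y x' k h1, qk_agree nk y x k h1]
  · simp only [qk, if_neg h1, dif_pos hst', dif_pos hst, hfind', ← hr]
    by_cases h2 : i < nk k + r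
    · rw [if_pos h2, if_pos h2, hag (2 * (i - nk k) + 1) (by omega)]
    · rw [if_neg h2, if_neg h2]

/-- the decoded subset of `ℚ`. -/
noncomputable def decSet (nk : ℕ → ℕ) (y x : ℕ → Bool) : Set (ℕ → Bool) :=
  Set.range (qk nk y x)

lemma decSet_mem_ideal (f : ℕ → ℕ) (hf : memH f) (nk : ℕ → ℕ) (hmono : StrictMono nk)
    (hbd : ∀ k, (k+1)*(k+2) ≤ f (nk k)) (y x : ℕ → Bool) :
    decSet nk y x ∈ idealIQ f := by
  refine ⟨?_, ?_⟩
  · rintro q ⟨k, rfl⟩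
    exact qk_mem_QSet nk y x k
  · intro d hd
    rw [Filter.eventually_atTop]
    refine ⟨nk d + 1, fun n hn => ?_⟩
    have hex : ∃ K, n ≤ nk K := ⟨n, hmono.le_apply⟩
    set K := Nat.find hex with hK
    have hKspec : n ≤ nk K := Nat.find_spec hex
    have hKmin : ∀ j < K, nk j < n := by
      intro j hj
      have := Nat.find_min hex hj
      omega
    have hdK : d < K := by
      by_contra hcon
      push_neg at hcon
      have := hmono.monotone hcon
      omega
    -- level bound
    have himg : (fun x0 : ℕ → Bool => (fun i : Fin n => x0 i)) '' decSet nk y x ⊆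
        insert (fun i : Fin n => y i)
          ((fun k => (fun i : Fin n => qk nk y x k i)) '' Set.Iio K) := by
      rintro _ ⟨q, ⟨k, rfl⟩, rfl⟩
      by_cases hk : k < K
      · exact Or.inr ⟨k, hk, rfl⟩
      · left
        funext i
        push_neg at hk
        exact qk_agree nk y x k (lt_of_lt_of_le i.isLt (le_trans hKspec (hmono.monotone hk)))
    have hfin : ((fun k => (fun i : Fin n => qk nk y x k i)) '' Set.Iio K).Finite :=
      Set.Finite.image _ (Set.finite_Iio K)
    have hlev : level (decSet nk y x) n ≤ K + 1 := by
      calc level (decSet nk y x) n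
          ≤ (insert (fun i : Fin n => y i)
              ((fun k => (fun i : Fin n => qk nk y x k i)) '' Set.Iio K)).ncard :=
            Set.ncard_le_ncard himg (hfin.insert _)
        _ ≤ ((fun k => (fun i : Fin n => qk nk y x k i)) '' Set.Iio K).ncard + 1 :=
            Set.ncard_insert_le _ _
        _ ≤ (Set.Iio K).ncard + 1 := by
            have := Set.ncard_image_le (f := fun k => (fun i : Fin n => qk nk y x k i))
              (s := Set.Iio K) (Set.finite_Iio K)
            omega
        _ = K + 1 := by rw [← Finset.coe_Iio, Set.ncard_coe_finset, Nat.card_Iio]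
    -- arithmetic
    have hK1 : 1 ≤ K := by omega
    have hnkK : nk (K - 1) < n := hKmin (K - 1) (by omega)
    have hfn : K * (K + 1) ≤ f n := by
      have h1 := hbd (K - 1)
      have h2 : f (nk (K - 1)) ≤ f n := hf.1 (le_of_lt hnkK)
      have h3 : (K - 1 + 1) * (K - 1 + 2) = K * (K + 1) := by
        congr 1 <;> omega
      omega
    calc d * level (decSet nk y x) n ≤ K * (K + 1) :=
          Nat.mul_le_mul (by omega) hlev
      _ ≤ f n := hfn


lemma meagre_part (nk : ℕ → ℕ) (y : ℕ → Bool) (A : Set (ℕ → Bool))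
    (hAQ : A ⊆ QSet) (hy : ∀ n, (A ∩ Cyl y n).Infinite) :
    IsMeagre {x : ℕ → Bool | (decSet nk y x ∩ A).Finite} := by
  classical
  set O : ℕ → Set (ℕ → Bool) := fun m =>
    {x | ∃ k, (∃ j, x (Nat.pair k (2 * j)) = true) ∧ qk nk y x k ∈ A ∧
      ∃ i, m ≤ i ∧ qk nk y x k i = true} with hO
  -- openness
  have hopen : ∀ m, IsOpen (O m) := by
    intro m
    rw [isOpen_iff_forall_mem_open]
    rintro x ⟨k, hst, hqA, i0, hi0, hbit⟩
    refine ⟨⋂ j ∈ Set.Iic (2 * Nat.find hst + 1),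
      {x' : ℕ → Bool | x' (Nat.pair k j) = x (Nat.pair k j)}, ?_, ?_, ?_⟩
    · intro x' hx'
      have hag : ∀ j ≤ 2 * Nat.find hst + 1, x' (Nat.pair k j) = x (Nat.pair k j) := by
        intro j hj
        exact Set.mem_iInter₂.mp hx' j hj
      have heq := qk_stable nk y x x' k hst hag
      refine ⟨k, ⟨Nat.find hst, ?_⟩, by rw [heq]; exact hqA, i0, hi0, by rw [heq]; exact hbit⟩
      rw [hag (2 * Nat.find hst) (by omega)]
      exact Nat.find_spec hst
    · refine Set.Finite.isOpen_biInter (Set.finite_Iic _) (fun j _ => ?_)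
      show IsOpen ((fun x' : ℕ → Bool => x' (Nat.pair k j)) ⁻¹' {x (Nat.pair k j)})
      exact (isOpen_discrete _).preimage (continuous_apply (Nat.pair k j))
    · exact Set.mem_iInter₂.mpr (fun j _ => rfl)
  -- density
  have hdense : ∀ m, Dense (O m) := by
    intro m
    rw [dense_iff_inter_open]
    intro U hU hUne
    obtain ⟨x₀, hx₀⟩ := hUne
    obtain ⟨I, u, hIu, hsub⟩ := isOpen_pi_iff.mp hU x₀ hx₀
    set k := (I.sup fun c => (Nat.unpair c).1) + 1 with hk
    have hknotin : ∀ j, Nat.pair k j ∉ I := by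
      intro j hj
      have h1 := Finset.le_sup (f := fun c => (Nat.unpair c).1) hj
      simp only [Nat.unpair_pair] at h1
      omega
    -- the finite set of sequences supported below m
    have hBd : {q : ℕ → Bool | ∀ i, m ≤ i → q i = false}.Finite := by
      have : Set.InjOn (fun q : ℕ → Bool => (fun i : Fin m => q i))
          {q : ℕ → Bool | ∀ i, m ≤ i → q i = false} := by
        intro q hq q' hq' heq
        funext i
        by_cases him : i < m
        · exact congrFun heq ⟨i, him⟩
        · rw [hq i (by omega), hq' i (by omega)]
      exact Set.Finite.of_finite_image (Set.toFinite _) this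
    obtain ⟨q, hqmem, hqBd⟩ := ((hy (nk k)).diff hBd).nonempty
    have hqA : q ∈ A := hqmem.1
    have hqCyl : ∀ i < nk k, q i = y i := hqmem.2
    obtain ⟨r, hr⟩ := mem_QSet_iff.mp (hAQ hqA)
    set x' : ℕ → Bool := fun c =>
      if (Nat.unpair c).1 = k then
        (if (Nat.unpair c).2 % 2 = 0 then decide ((Nat.unpair c).2 = 2 * r)
         else q (nk k + ((Nat.unpair c).2 - 1) / 2))
      else x₀ c with hx'
    have hx'I : ∀ a ∈ I, x' a = x₀ a := by
      intro a ha
      have : (Nat.unpair a).1 ≠ k := by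
        intro hcon
        apply hknotin (Nat.unpair a).2
        rw [← hcon, Nat.pair_unpair]
        exact ha
      simp only [x', if_neg this]
    have hx'U : x' ∈ U := by
      apply hsub
      rw [Set.mem_pi]
      intro a ha
      rw [hx'I a ha]
      exact (hIu a ha).2
    have heven : ∀ j ≤ r, x' (Nat.pair k (2 * j)) = decide (j = r) := by
      intro j _
      simp only [x', Nat.unpair_pair, if_pos rfl, Nat.mul_mod_right, if_pos rfl]
      exact decide_eq_decide.mpr (by omega)
    have hodd : ∀ i < r, x' (Nat.pair k (2 * i + 1)) = q (nk k + i) := by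
      intro i _
      have h1 : (2 * i + 1) % 2 = 1 := by omega
      have h2 : (2 * i + 1 - 1) / 2 = i := by omega
      simp only [x', Nat.unpair_pair, if_pos rfl, h1, h2]
      norm_num
    have hqk : qk nk y x' k = q :=
      qk_eq nk y x' k hqCyl (fun i hi => hr i (by omega)) heven hodd
    refine ⟨x', hx'U, k, ⟨r, ?_⟩, by rw [hqk]; exact hqA, ?_⟩
    · rw [heven r le_rfl]; simp
    · simp only [mem_setOf_eq] at hqBd
      push_neg at hqBd
      obtain ⟨i, him, hbit⟩ := hqBd
      exact ⟨i, him, by rw [hqk]; exact Bool.not_eq_false _ |>.mp hbit⟩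
  -- the intersection avoids the "finite intersection" set
  have hOsub : (⋂ m, O m) ⊆ {x : ℕ → Bool | (decSet nk y x ∩ A).Finite}ᶜ := by
    intro x hx
    simp only [mem_compl_iff, mem_setOf_eq]
    intro hfin
    set Nq : (ℕ → Bool) → ℕ := fun q =>
      if h : ∃ N, ∀ i ≥ N, q i = false then Nat.find h else 0 with hNq
    set m := hfin.toFinset.sup Nq with hm
    obtain ⟨k, hst, hqA, i, him, hbit⟩ := Set.mem_iInter.mp hx m
    have hqmem : qk nk y x k ∈ decSet nk y x ∩ A := ⟨⟨k, rfl⟩, hqA⟩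
    have hqfin : ∃ N, ∀ i ≥ N, (qk nk y x k) i = false :=
      mem_QSet_iff.mp (qk_mem_QSet nk y x k)
    have hNqle : Nq (qk nk y x k) ≤ m := by
      rw [hm]
      exact Finset.le_sup (Set.Finite.mem_toFinset hfin |>.mpr hqmem)
    have : qk nk y x k i = false := by
      have h1 : Nq (qk nk y x k) = Nat.find hqfin := by
        simp only [Nq, dif_pos hqfin]
      exact Nat.find_spec hqfin i (by omega)
    rw [this] at hbit
    exact Bool.false_ne_true hbit
  have hres : (⋂ m, O m) ∈ residual (ℕ → Bool) := by
    refine countable_iInter_mem.mpr (fun m => ?_)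
    refine mem_residual_iff.mpr ⟨{O m}, ?_, ?_, countable_singleton _, by simp⟩
    · intro t ht; rw [Set.mem_singleton_iff] at ht; rw [ht]; exact hopen m
    · intro t ht; rw [Set.mem_singleton_iff] at ht; rw [ht]; exact hdense m
  exact Filter.mem_of_superset hres hOsub


lemma cov_le_mk (f : ℕ → ℕ) (hf : memH f) (F : Set (Set (ℕ → Bool))) (hFB : IsFilterBaseQ F)
    (hpos : ∀ A ∈ F, A ∉ idealIQ f) (hav : ∀ I ∈ idealIQ f, ∃ A ∈ F, (I ∩ A).Finite) :
    covMeagre ≤ Cardinal.mk F := by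
  obtain ⟨hne, hQ, hdir⟩ := hFB
  obtain ⟨y, hy⟩ := exists_branch F hdir
    (fun A hA => infinite_of_pos hf (hQ A hA) (hpos A hA))
  obtain ⟨nk, hmono, hbd⟩ := exists_ladder f hf
  set M : Set (ℕ → Bool) → Set (ℕ → Bool) :=
    fun A => {x | (decSet nk y x ∩ A).Finite} with hM
  have h1 : ∀ B ∈ M '' F, IsMeagre B := by
    rintro B ⟨A, hA, rfl⟩
    exact meagre_part nk y A (hQ A hA) (hy A hA)
  have h2 : ⋃₀ (M '' F) = Set.univ := by
    refine Set.eq_univ_of_forall (fun x => ?_)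
    obtain ⟨A, hA, hfin⟩ := hav (decSet nk y x) (decSet_mem_ideal f hf nk hmono hbd y x)
    exact Set.mem_sUnion.mpr ⟨M A, ⟨A, hA, rfl⟩, hfin⟩
  calc covMeagre ≤ Cardinal.mk (M '' F) :=
        csInf_le (OrderBot.bddBelow _) ⟨M '' F, h1, h2, rfl⟩
    _ ≤ Cardinal.mk F := Cardinal.mk_image_le

lemma geI_set_nonempty (f : ℕ → ℕ) (hfH : memH f) :
    {c : Cardinal | ∃ F : Set (Set (ℕ → Bool)), IsFilterBaseQ F ∧
      (∀ A ∈ F, A ∉ idealIQ f) ∧ (∀ I ∈ idealIQ f, ∃ A ∈ F, (I ∩ A).Finite) ∧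
      Cardinal.mk F = c}.Nonempty := by
  refine ⟨_, (fun I => QSet \ I) '' (idealIQ f), ⟨?_, ?_, ?_⟩, ?_, ?_, rfl⟩
  · exact ⟨QSet \ ∅, ⟨∅, ideal_empty f, rfl⟩⟩
  · rintro A ⟨I, hI, rfl⟩
    exact Set.diff_subset
  · rintro A ⟨I, hI, rfl⟩ B ⟨J, hJ, rfl⟩
    refine ⟨QSet \ (I ∪ J), ⟨I ∪ J, ideal_union hI hJ, rfl⟩, ?_⟩
    intro q hq
    exact ⟨⟨hq.1, fun h => hq.2 (Or.inl h)⟩, hq.1, fun h => hq.2 (Or.inr h)⟩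
  · rintro A ⟨I, hI, rfl⟩
    exact compl_pos hfH hI
  · intro I hI
    refine ⟨QSet \ I, ⟨I, hI, rfl⟩, ?_⟩
    have : I ∩ (QSet \ I) = ∅ := by
      ext q
      simp only [Set.mem_inter_iff, Set.mem_diff, Set.mem_empty_iff_false, iff_false]
      tauto
    rw [this]
    exact Set.finite_empty

end Ge14

theorem stmt_14 :
    (∀ f : ℕ → ℕ, memH f → covMeagre ≤ geI f) ∧ covMeagre ≤ geLaver := by
  have part1 : ∀ f : ℕ → ℕ, memH f → covMeagre ≤ geI f := by
    intro f hf
    refine le_csInf (Ge14.geI_set_nonempty f hf) ?_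
    rintro c ⟨F, hFB, hpos, hav, rfl⟩
    exact Ge14.cov_le_mk f hf F hFB hpos hav
  refine ⟨part1, ?_⟩
  have hid : memH (fun n => n) := ⟨fun a b h => h, fun m => ⟨m, le_rfl⟩, fun n => le_rfl⟩
  refine le_csInf ⟨geI (fun n => n), (fun n => n), hid, rfl⟩ ?_
  rintro c ⟨f, hf, rfl⟩
  exact part1 f hf
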